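/- For every family H of subsets of ω^{n+1} with each member in FIN^{n+1} and |H| < 𝔟, and every infinite B ⊆ ω, there exists a block sequence A ⊆ B^{n+1} (viewing elements as strictly increasing (n+1)-tuples) such that A ∩ X is finite for every X ∈ H. -/
import Mathlib


/-- `f ≤* g` : eventual domination. -/
def LeStar (f g : ℕ → ℕ) : Prop := {n | g n < f n}.Finite

/-- The bounding number 𝔟. -/
noncomputable def bNumber : Cardinal :=
  sInf {c | ∃ F : Set (ℕ → ℕ), Cardinal.mk F = c ∧ ∀ g : ℕ → ℕ, ∃ f ∈ F, ¬ LeStar f g}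

/-- `FINpow n` is the Fubini power `FIN^(n+1)`, an ideal on `ω^(n+1)`. -/
def FINpow : (n : ℕ) → Set (Set (Fin (n + 1) → ℕ))
  | 0 => {A | A.Finite}
  | n + 1 => {A | {s : Fin (n + 1) → ℕ | {m : ℕ | Fin.snoc s m ∈ A}.Infinite} ∈ FINpow n}

/-- A block sequence of strictly increasing `(n+1)`-tuples. -/
def IsBlockSeq {n : ℕ} (a : ℕ → (Fin (n + 1) → ℕ)) : Prop :=
  (∀ m, StrictMono (a m)) ∧ ∀ m, a m (Fin.last n) < a (m + 1) 0

/-- Every set in `FIN^(n+1)` is avoided by all sufficiently fast increasing tuples. -/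
lemma finpow_dom : ∀ (n : ℕ) (X : Set (Fin (n + 1) → ℕ)), X ∈ FINpow n →
    ∃ f : ℕ → ℕ, ∀ s : Fin (n + 1) → ℕ, StrictMono s → f 0 ≤ s 0 →
      (∀ i : Fin n, f (s i.castSucc) < s i.succ) → s ∉ X := by
  intro n
  induction n with
  | zero =>
    intro X hX
    have hX' : X.Finite := hX
    obtain ⟨N, hN⟩ := (hX'.image (fun s => s 0)).bddAbove
    refine ⟨fun _ => N + 1, fun s _ h0 _ hs => ?_⟩
    have h0' : N + 1 ≤ s 0 := h0
    have : s 0 ≤ N := hN ⟨s, hs, rfl⟩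
    omega
  | succ n ih =>
    intro X hX
    obtain ⟨f₀, hf₀⟩ := ih _ hX
    set T : ℕ → Set (Fin (n + 1) → ℕ) := fun t =>
      {s | StrictMono s ∧ f₀ 0 ≤ s 0 ∧ (∀ i : Fin n, f₀ (s i.castSucc) < s i.succ) ∧
        s (Fin.last n) ≤ t} with hT
    have hTfin : ∀ t, (T t).Finite := by
      intro t
      have h1 : (Set.pi Set.univ (fun _ : Fin (n+1) => Set.Iic t)).Finite :=
        Set.Finite.pi (fun _ => Set.finite_Iic t)
      refine h1.subset (fun s hs => ?_)
      simp only [Set.mem_pi, Set.mem_univ, Set.mem_Iic, forall_true_left]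
      intro i
      exact le_trans (hs.1.monotone (Fin.le_last i)) hs.2.2.2
    set bd : (Fin (n + 1) → ℕ) → ℕ := fun s => sSup {m | Fin.snoc s m ∈ X} with hbd
    refine ⟨fun t => max (f₀ t) ((hTfin t).toFinset.sup bd), fun s hs h0 hfast hsX => ?_⟩
    set s' : Fin (n + 1) → ℕ := Fin.init s with hs'
    set m : ℕ := s (Fin.last (n + 1)) with hm
    have hsnoc : Fin.snoc s' m = s := Fin.snoc_init_self s
    have hs'mono : StrictMono s' := by
      intro i j hij
      exact hs (by simpa using hij)
    have hs'0 : f₀ 0 ≤ s' 0 := by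
      have h0' : max (f₀ 0) ((hTfin 0).toFinset.sup bd) ≤ s 0 := h0
      have e : s' 0 = s 0 := rfl
      omega
    have hs'fast : ∀ i : Fin n, f₀ (s' i.castSucc) < s' i.succ := by
      intro i
      have h : max (f₀ (s i.castSucc.castSucc)) _ < s i.castSucc.succ := hfast i.castSucc
      have e1 : s' i.castSucc = s i.castSucc.castSucc := rfl
      have e2 : s' i.succ = s i.succ.castSucc := rfl
      rw [e1, e2, ← Fin.succ_castSucc]
      exact lt_of_le_of_lt (le_max_left _ _) h
    have hs'Y : s' ∉ {s : Fin (n + 1) → ℕ | {m : ℕ | Fin.snoc s m ∈ X}.Infinite} :=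
      hf₀ s' hs'mono hs'0 hs'fast
    have hfin : {m : ℕ | Fin.snoc s' m ∈ X}.Finite := Set.not_infinite.mp hs'Y
    set t : ℕ := s' (Fin.last n) with ht
    have hs'T : s' ∈ T t := ⟨hs'mono, hs'0, hs'fast, le_refl _⟩
    have hmX : m ∈ {m : ℕ | Fin.snoc s' m ∈ X} := by
      show Fin.snoc s' m ∈ X
      rw [hsnoc]; exact hsX
    have hmle : m ≤ bd s' := le_csSup hfin.bddAbove hmX
    have hbdle : bd s' ≤ (hTfin t).toFinset.sup bd :=
      Finset.le_sup ((hTfin t).mem_toFinset.mpr hs'T)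
    have hlast : max (f₀ (s (Fin.last n).castSucc))
        ((hTfin (s (Fin.last n).castSucc)).toFinset.sup bd) < s (Fin.last n).succ :=
      hfast (Fin.last n)
    have e3 : s (Fin.last n).castSucc = t := rfl
    have e4 : s (Fin.last n).succ = m := by rw [hm, Fin.succ_last]
    rw [e3, e4] at hlast
    omega

/-- A family of size `< 𝔟` is bounded. -/
lemma bounded_of_small (F : Set (ℕ → ℕ)) (h : Cardinal.mk F < bNumber) :
    ∃ g, ∀ f ∈ F, LeStar f g := by
  by_contra hc
  push_neg at hc
  have hmem : Cardinal.mk F ∈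
      {c | ∃ F : Set (ℕ → ℕ), Cardinal.mk F = c ∧ ∀ g : ℕ → ℕ, ∃ f ∈ F, ¬ LeStar f g} :=
    ⟨F, rfl, fun g => by obtain ⟨f, hf, hf'⟩ := hc g; exact ⟨f, hf, hf'⟩⟩
  exact absurd (csInf_le (OrderBot.bddBelow _) hmem) (not_le.2 h)

lemma lestar_bound {f g : ℕ → ℕ} (h : LeStar f g) : ∃ K, ∀ k, K ≤ k → f k ≤ g k := by
  obtain ⟨K, hK⟩ := h.bddAbove
  refine ⟨K + 1, fun k hk => ?_⟩
  by_contra hc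
  have : k ≤ K := hK (Set.mem_setOf.mpr (by omega))
  omega

/-- For every family `H ⊆ FIN^(n+1)` of size `< 𝔟` and every infinite `B ⊆ ω`,
there is a block sequence inside `B^(n+1)` almost disjoint from every member of `H`. -/
theorem blockSeq_avoiding_small_family (n : ℕ)
    (H : Set (Set (Fin (n + 1) → ℕ))) (hH : H ⊆ FINpow n)
    (hsmall : Cardinal.mk H < bNumber)
    (B : Set ℕ) (hB : B.Infinite) :
    ∃ a : ℕ → (Fin (n + 1) → ℕ), IsBlockSeq a ∧
      (∀ m, ∀ i, a m i ∈ B) ∧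
      ∀ X ∈ H, (Set.range a ∩ X).Finite := by
  -- choose dominating functions for each member of H
  have hdom : ∀ X : H, ∃ f : ℕ → ℕ, ∀ s : Fin (n + 1) → ℕ, StrictMono s → f 0 ≤ s 0 →
      (∀ i : Fin n, f (s i.castSucc) < s i.succ) → s ∉ (X : Set (Fin (n + 1) → ℕ)) :=
    fun X => finpow_dom n X (hH X.2)
  choose F hF using hdom
  -- a single g dominating all of them
  have hsmall' : Cardinal.mk (Set.range F) < bNumber :=
    lt_of_le_of_lt Cardinal.mk_range_le hsmall
  obtain ⟨g, hg⟩ := bounded_of_small _ hsmall'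
  have hgF : ∀ X : H, LeStar (F X) g := fun X => hg _ ⟨X, rfl⟩
  -- monotone majorant of g
  set G : ℕ → ℕ := fun k => (Finset.range (k + 1)).sup g with hG
  have hgG : ∀ k, g k ≤ G k := fun k => Finset.le_sup (Finset.self_mem_range_succ k)
  -- fast sequence in B
  have hex : ∀ N : ℕ, ∃ x, x ∈ B ∧ N < x := by
    intro N; obtain ⟨x, hx, hx'⟩ := hB.exists_gt N; exact ⟨x, hx, hx'⟩
  choose c hc1 hc2 using hex
  set b : ℕ → ℕ := fun j => Nat.rec (c 0) (fun _ p => c (max p (G p))) j with hb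
  have hbB : ∀ j, b j ∈ B := by
    intro j; cases j with
    | zero => exact hc1 0
    | succ j => exact hc1 _
  have hbs : ∀ j, b j < b (j + 1) := by
    intro j
    have : max (b j) (G (b j)) < b (j + 1) := hc2 _
    omega
  have hbG : ∀ j, G (b j) < b (j + 1) := by
    intro j
    have : max (b j) (G (b j)) < b (j + 1) := hc2 _
    omega
  have hbmono : StrictMono b := strictMono_nat_of_lt_succ hbs
  have hbge : ∀ j, j ≤ b j := by
    intro j
    induction j with
    | zero => exact Nat.zero_le _
    | succ j ih => have := hbs j; omega
  -- define the block sequence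
  refine ⟨fun m i => b (m * (n + 1) + i.val), ⟨?_, ?_⟩, ?_, ?_⟩
  · intro m i j hij
    exact hbmono (by omega)
  · intro m
    have : m * (n + 1) + n + 1 = (m + 1) * (n + 1) + 0 := by ring
    have h := hbs (m * (n + 1) + n)
    simpa [this] using h
  · intro m i; exact hbB _
  · intro X hX
    set f : ℕ → ℕ := F ⟨X, hX⟩ with hf
    obtain ⟨K, hK⟩ := lestar_bound (hgF ⟨X, hX⟩)
    set M : ℕ := max K (f 0) with hM
    set a : ℕ → (Fin (n + 1) → ℕ) := fun m i => b (m * (n + 1) + i.val) with ha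
    have hnotin : ∀ m, M ≤ m → a m ∉ X := by
      intro m hm
      have hcoord : ∀ j : ℕ, m ≤ b (m * (n + 1) + j) := by
        intro j
        have h1 : m ≤ m * (n + 1) + j := Nat.le_add_right _ _ |>.trans' (by nlinarith)
        exact h1.trans (hbge _)
      refine hF ⟨X, hX⟩ (a m) ?_ ?_ ?_
      · intro i j hij; exact hbmono (by omega)
      · have : f 0 ≤ m := le_trans (le_max_right _ _) hm
        exact this.trans (hcoord 0)
      · intro i
        have e1 : a m i.castSucc = b (m * (n + 1) + i.val) := rfl
        have e2 : a m i.succ = b (m * (n + 1) + i.val + 1) := by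
          show b (m * (n + 1) + (i.val + 1)) = _
          ring_nf
        rw [e1, e2]
        have hc : K ≤ b (m * (n + 1) + i.val) :=
          le_trans (le_trans (le_max_left _ _) hm) (hcoord _)
        calc f (b (m * (n + 1) + i.val)) ≤ g (b (m * (n + 1) + i.val)) := hK _ hc
          _ ≤ G (b (m * (n + 1) + i.val)) := hgG _
          _ < b (m * (n + 1) + i.val + 1) := hbG _
    have hsub : Set.range a ∩ X ⊆ a '' Set.Iio M := by
      rintro y ⟨⟨m, rfl⟩, hyX⟩
      refine ⟨m, ?_, rfl⟩
      by_contra hmM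
      exact hnotin m (by simpa using Set.notMem_Iio.mp hmM) hyX
    exact ((Set.finite_Iio M).image a).subset hsub
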